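/- Let n > -1 and ν > -(n+1)/2. Then the expression (2(ν+n+1)/(n+1)) x^{-ν} L_{ν+n+1}(x) − ((2ν+n+1)/(n+1)) x^{-ν} L_{ν+n+3}(x) + b_{ν,n} x^{n+4} − c_{ν,n} x^{n+2} is asymptotically equivalent to x^{n+2} / (√π · 2^{ν+n} · (n+2) · Γ(ν + n + 3/2)) as x ↓ 0; that is, the ratio of the two quantities tends to 1 as x tends to 0 from the right. In particular, the upper bound for ∫₀ˣ t^{-ν} L_{ν+n}(t) dt given by this expression is tight as x ↓ 0. -/

import Mathlib

open Real Filter Set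

/-- The modified Struve function of the first kind. -/
noncomputable def modStruveL (ν x : ℝ) : ℝ :=
  ∑' k : ℕ, (x / 2) ^ (ν + 2 * (k : ℝ) + 1) /
    (Real.Gamma ((k : ℝ) + 3 / 2) * Real.Gamma ((k : ℝ) + ν + 3 / 2))

/-- The constant `b_{ν,n}`. -/
noncomputable def bConst (ν n : ℝ) : ℝ :=
  ((2 * ν + n + 1) * (2 * ν + n + 3)) /
    (Real.sqrt Real.pi * (2 : ℝ) ^ (ν + n + 4) * (n + 1) * (n + 4) * (ν + n + 3) *
      Real.Gamma (ν + n + 9 / 2))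

/-- The constant `c_{ν,n}`. -/
noncomputable def cConst (ν n : ℝ) : ℝ :=
  (2 * ν + n + 1) /
    (Real.sqrt Real.pi * (2 : ℝ) ^ (ν + n + 1) * (n + 1) * (n + 2) *
      Real.Gamma (ν + n + 5 / 2))

lemma gamma_fact_le {t : ℝ} (ht : 1 ≤ t) (k : ℕ) :
    Real.Gamma t * k.factorial ≤ Real.Gamma (t + k) := by
  induction k with
  | zero => simp
  | succ k ih =>
    have ht0 : (0:ℝ) < t := lt_of_lt_of_le one_pos ht
    have htk : (0:ℝ) < t + k := by positivity
    have hG : (0:ℝ) < Real.Gamma (t + k) := Real.Gamma_pos_of_pos htk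
    have h1 : Real.Gamma (t + ((k:ℕ)+1 : ℕ)) = (t + k) * Real.Gamma (t + k) := by
      push_cast
      rw [show t + ((k:ℝ)+1) = (t + (k:ℝ)) + 1 by ring, Real.Gamma_add_one htk.ne']
    rw [h1]
    have hk1 : ((k:ℝ)+1) ≤ t + k := by linarith
    calc Real.Gamma t * ((k+1).factorial : ℝ)
        = ((k:ℝ)+1) * (Real.Gamma t * k.factorial) := by
          rw [Nat.factorial_succ]; push_cast; ring
      _ ≤ (t + k) * (Real.Gamma t * k.factorial) := by
          have := (Real.Gamma_pos_of_pos ht0).le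
          apply mul_le_mul_of_nonneg_right hk1
          positivity
      _ ≤ (t + k) * Real.Gamma (t + k) := by
          exact mul_le_mul_of_nonneg_left ih htk.le


noncomputable def Gaux (μ y : ℝ) : ℝ :=
  ∑' k : ℕ, y ^ k / (Real.Gamma ((k : ℝ) + 3 / 2) * Real.Gamma ((k : ℝ) + μ + 3 / 2))

lemma gamma_k_bound {μ : ℝ} (hμ : 0 ≤ μ) (k : ℕ) :
    Real.Gamma (3/2) * k.factorial * Real.Gamma (μ + 3/2) ≤
      Real.Gamma ((k : ℝ) + 3 / 2) * Real.Gamma ((k : ℝ) + μ + 3 / 2) := by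
  have h1 : Real.Gamma (3/2) * k.factorial ≤ Real.Gamma ((k:ℝ) + 3/2) := by
    have := gamma_fact_le (t := 3/2) (by norm_num) k
    rwa [show (3:ℝ)/2 + k = (k:ℝ) + 3/2 by ring] at this
  have h2 : Real.Gamma (μ + 3/2) ≤ Real.Gamma ((k:ℝ) + μ + 3/2) := by
    have := gamma_fact_le (t := μ + 3/2) (by linarith) k
    rw [show μ + 3/2 + k = (k:ℝ) + μ + 3/2 by ring] at this
    calc Real.Gamma (μ + 3/2) = Real.Gamma (μ+3/2) * 1 := by ring
      _ ≤ Real.Gamma (μ+3/2) * k.factorial := by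
          have h3 : (1:ℝ) ≤ k.factorial := by exact_mod_cast k.factorial_pos
          have h4 := (Real.Gamma_pos_of_pos (show (0:ℝ) < μ+3/2 by linarith)).le
          exact mul_le_mul_of_nonneg_left h3 h4
      _ ≤ _ := this
  have h5 : (0:ℝ) < Real.Gamma (3/2) * k.factorial :=
    mul_pos (Real.Gamma_pos_of_pos (by norm_num)) (by exact_mod_cast k.factorial_pos)
  have h6 : (0:ℝ) < Real.Gamma (μ + 3/2) :=
    Real.Gamma_pos_of_pos (by linarith)
  exact mul_le_mul h1 h2 h6.le ((Real.Gamma_pos_of_pos (by positivity)).le)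

lemma summable_Gaux {μ : ℝ} (hμ : 0 ≤ μ) (y : ℝ) :
    Summable (fun k : ℕ => y ^ k /
      (Real.Gamma ((k : ℝ) + 3 / 2) * Real.Gamma ((k : ℝ) + μ + 3 / 2))) := by
  apply Summable.of_norm_bounded
    (g := fun k : ℕ => |y| ^ k / (k.factorial : ℝ) *
        (1 / (Real.Gamma (3/2) * Real.Gamma (μ + 3/2))))
  · exact (Real.summable_pow_div_factorial |y|).mul_right _
  · intro k
    have hD : (0:ℝ) < Real.Gamma ((k:ℝ) + 3/2) * Real.Gamma ((k:ℝ) + μ + 3/2) := by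
      have := Real.Gamma_pos_of_pos (show (0:ℝ) < (k:ℝ) + 3/2 by positivity)
      have := Real.Gamma_pos_of_pos (show (0:ℝ) < (k:ℝ) + μ + 3/2 by positivity)
      positivity
    have hD2 : (0:ℝ) < Real.Gamma (3/2) * k.factorial * Real.Gamma (μ + 3/2) := by
      have := Real.Gamma_pos_of_pos (show (0:ℝ) < (3:ℝ)/2 by norm_num)
      have := Real.Gamma_pos_of_pos (show (0:ℝ) < μ + 3/2 by linarith)
      have : (0:ℝ) < k.factorial := by exact_mod_cast k.factorial_pos
      positivity
    rw [norm_div, norm_pow, Real.norm_eq_abs, Real.norm_eq_abs, abs_of_pos hD]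
    calc |y| ^ k / (Real.Gamma ((k:ℝ) + 3/2) * Real.Gamma ((k:ℝ) + μ + 3/2))
        ≤ |y| ^ k / (Real.Gamma (3/2) * k.factorial * Real.Gamma (μ + 3/2)) :=
          div_le_div_of_nonneg_left (by positivity) hD2 (gamma_k_bound hμ k)
      _ = |y| ^ k / (k.factorial : ℝ) * (1 / (Real.Gamma (3/2) * Real.Gamma (μ + 3/2))) := by
          rw [div_mul_div_comm, mul_one]; ring_nf

set_option maxHeartbeats 1000000 in
lemma tendsto_Gaux {μ : ℝ} (hμ : 0 ≤ μ) :
    Filter.Tendsto (Gaux μ) (nhdsWithin 0 (Set.Ioi 0))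
      (nhds (1 / (Real.Gamma (3/2) * Real.Gamma (μ + 3/2)))) := by
  set c0 : ℝ := 1 / (Real.Gamma (3/2) * Real.Gamma (μ + 3/2)) with hc0
  -- the shifted coefficient sum
  have hg : Summable (fun k : ℕ =>
      1 / (Real.Gamma ((k : ℝ) + 3 / 2) * Real.Gamma ((k : ℝ) + μ + 3 / 2))) := by
    simpa using summable_Gaux hμ 1
  have hg' : Summable (fun k : ℕ =>
      1 / (Real.Gamma (((k+1) : ℕ) + 3 / 2) * Real.Gamma (((k+1) : ℕ) + μ + 3 / 2))) :=
    (summable_nat_add_iff 1).mpr hg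
  set M : ℝ := ∑' k : ℕ,
      1 / (Real.Gamma (((k+1) : ℕ) + 3 / 2) * Real.Gamma (((k+1) : ℕ) + μ + 3 / 2)) with hM
  have hpos : ∀ k : ℕ, (0:ℝ) <
      Real.Gamma ((k : ℝ) + 3 / 2) * Real.Gamma ((k : ℝ) + μ + 3 / 2) := by
    intro k
    have := Real.Gamma_pos_of_pos (show (0:ℝ) < (k:ℝ) + 3/2 by positivity)
    have := Real.Gamma_pos_of_pos (show (0:ℝ) < (k:ℝ) + μ + 3/2 by positivity)
    positivity
  have key : ∀ y : ℝ, y ∈ Set.Ioc (0:ℝ) 1 →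
      c0 ≤ Gaux μ y ∧ Gaux μ y ≤ c0 + y * M := by
    intro y hy
    have hy0 : 0 < y := hy.1
    have hy1 : y ≤ 1 := hy.2
    have hs := summable_Gaux hμ y
    have hsplit : Gaux μ y = c0 + ∑' k : ℕ,
        y ^ (k+1) / (Real.Gamma (((k+1) : ℕ) + 3 / 2) * Real.Gamma (((k+1) : ℕ) + μ + 3 / 2)) := by
      rw [Gaux, Summable.tsum_eq_zero_add hs]
      congr 1
      rw [hc0]
      push_cast
      rw [pow_zero, zero_add, zero_add]
    have hterm_nonneg : ∀ k : ℕ, 0 ≤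
        y ^ (k+1) / (Real.Gamma (((k+1) : ℕ) + 3 / 2) * Real.Gamma (((k+1) : ℕ) + μ + 3 / 2)) := by
      intro k
      have := hpos (k+1)
      push_cast at this ⊢
      positivity
    have hshift : Summable (fun k : ℕ =>
        y ^ (k+1) / (Real.Gamma (((k+1) : ℕ) + 3 / 2) * Real.Gamma (((k+1) : ℕ) + μ + 3 / 2))) :=
      (summable_nat_add_iff 1).mpr hs
    constructor
    · rw [hsplit]
      have : 0 ≤ ∑' k : ℕ,
          y ^ (k+1) / (Real.Gamma (((k+1) : ℕ) + 3 / 2) * Real.Gamma (((k+1) : ℕ) + μ + 3 / 2)) :=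
        tsum_nonneg hterm_nonneg
      linarith
    · rw [hsplit]
      have hle : ∀ k : ℕ,
          y ^ (k+1) / (Real.Gamma (((k+1) : ℕ) + 3 / 2) * Real.Gamma (((k+1) : ℕ) + μ + 3 / 2)) ≤
          y * (1 / (Real.Gamma (((k+1) : ℕ) + 3 / 2) * Real.Gamma (((k+1) : ℕ) + μ + 3 / 2))) := by
        intro k
        have hD := hpos (k+1)
        push_cast at hD
        have hyk : y ^ (k+1) ≤ y := by
          calc y ^ (k+1) = y * y ^ k := by ring
            _ ≤ y * 1 := by
                exact mul_le_mul_of_nonneg_left (pow_le_one₀ hy0.le hy1) hy0.le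
            _ = y := mul_one y
        rw [div_eq_mul_one_div, mul_comm (y ^ (k+1))]
        rw [mul_comm y]
        apply mul_le_mul_of_nonneg_left hyk
        positivity
      have := Summable.tsum_le_tsum hle hshift (hg'.mul_left y)
      rw [tsum_mul_left] at this
      linarith
  have hupper : Filter.Tendsto (fun y : ℝ => c0 + y * M) (nhdsWithin 0 (Set.Ioi 0)) (nhds c0) := by
    have : Filter.Tendsto (fun y : ℝ => c0 + y * M) (nhds 0) (nhds (c0 + 0 * M)) :=
      (tendsto_const_nhds.add ((continuous_id.mul continuous_const).tendsto 0))
    simpa using this.mono_left nhdsWithin_le_nhds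
  have hmem : ∀ᶠ y in nhdsWithin (0:ℝ) (Set.Ioi 0), y ∈ Set.Ioc (0:ℝ) 1 := by
    filter_upwards [self_mem_nhdsWithin,
      (eventually_lt_nhds one_pos).filter_mono nhdsWithin_le_nhds] with y h1 h2
    exact ⟨h1, h2.le⟩
  refine tendsto_of_tendsto_of_tendsto_of_le_of_le' tendsto_const_nhds hupper ?_ ?_
  · filter_upwards [hmem] with y hy using (key y hy).1
  · filter_upwards [hmem] with y hy using (key y hy).2

lemma modStruveL_eq {x : ℝ} (hx : 0 < x) (μ : ℝ) :
    modStruveL μ x = (x / 2) ^ (μ + 1) * Gaux μ ((x / 2) ^ 2) := by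
  rw [modStruveL, Gaux, ← tsum_mul_left]
  congr 1
  ext k
  have hx2 : (0:ℝ) < x / 2 := by positivity
  have h : (x/2) ^ (μ + 2 * (k:ℝ) + 1) = (x/2) ^ (μ+1) * ((x/2) ^ 2) ^ k := by
    rw [show μ + 2 * (k:ℝ) + 1 = (μ + 1) + ((2 * k : ℕ) : ℝ) by push_cast; ring,
      Real.rpow_add hx2, Real.rpow_natCast, pow_mul]
  rw [h, mul_div_assoc]

lemma xrw {x : ℝ} (hx : 0 < x) (ν μ : ℝ) :
    x ^ (-ν) * modStruveL μ x =
      x ^ (μ - ν + 1) * (2:ℝ) ^ (-(μ+1)) * Gaux μ ((x/2) ^ 2) := by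
  rw [modStruveL_eq hx μ, Real.div_rpow hx.le (by norm_num), Real.rpow_neg (by norm_num : (0:ℝ) ≤ 2)]
  have h : x ^ (μ - ν + 1) = x ^ (-ν) * x ^ (μ + 1) := by
    rw [← Real.rpow_add hx]; ring_nf
  rw [h, div_eq_mul_inv]
  ring

set_option maxHeartbeats 1000000 in
theorem struve_upper_bound_asymptotic_zero (ν n : ℝ) (hn : n > -1)
    (hν : ν > -((n + 1) / 2)) :
    Filter.Tendsto
      (fun x : ℝ =>
        ((2 * (ν + n + 1) / (n + 1)) * (x ^ (-ν) * modStruveL (ν + n + 1) x) -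
        ((2 * ν + n + 1) / (n + 1)) * (x ^ (-ν) * modStruveL (ν + n + 3) x) +
        bConst ν n * x ^ (n + 4) - cConst ν n * x ^ (n + 2)) /
          (x ^ (n + 2) /
            (Real.sqrt Real.pi * (2 : ℝ) ^ (ν + n) * (n + 2) * Real.Gamma (ν + n + 3 / 2))))
      (nhdsWithin 0 (Set.Ioi 0)) (nhds 1) := by
  have hn1 : (0:ℝ) < n + 1 := by linarith
  have hn2 : (0:ℝ) < n + 2 := by linarith
  have hs : (0:ℝ) < ν + n + 3/2 := by linarith
  have hμ1 : (0:ℝ) ≤ ν + n + 1 := by linarith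
  have hμ2 : (0:ℝ) ≤ ν + n + 3 := by linarith
  have hπ : (0:ℝ) < Real.sqrt Real.pi := Real.sqrt_pos.mpr Real.pi_pos
  have hΓ : 0 < Real.Gamma (ν + n + 3/2) := Real.Gamma_pos_of_pos hs
  have hP : (0:ℝ) < (2:ℝ) ^ (ν + n) := Real.rpow_pos_of_pos two_pos _
  set Q : ℝ := Real.sqrt Real.pi * (2:ℝ) ^ (ν + n) * (n + 2) * Real.Gamma (ν + n + 3/2) with hQdef
  have hQ0 : 0 < Q := by positivity
  -- eventual rewriting of the quotient
  have heq : (fun x : ℝ =>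
        ((2 * (ν + n + 1) / (n + 1)) * (x ^ (-ν) * modStruveL (ν + n + 1) x) -
        ((2 * ν + n + 1) / (n + 1)) * (x ^ (-ν) * modStruveL (ν + n + 3) x) +
        bConst ν n * x ^ (n + 4) - cConst ν n * x ^ (n + 2)) /
          (x ^ (n + 2) / Q)) =ᶠ[nhdsWithin 0 (Set.Ioi 0)]
      (fun x : ℝ => Q * ((2 * (ν + n + 1) / (n + 1)) * (2:ℝ) ^ (-(ν + n + 2)) *
          Gaux (ν + n + 1) ((x/2) ^ 2) -
        ((2 * ν + n + 1) / (n + 1)) * (2:ℝ) ^ (-(ν + n + 4)) * x ^ 2 *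
          Gaux (ν + n + 3) ((x/2) ^ 2) +
        bConst ν n * x ^ 2 - cConst ν n)) := by
    filter_upwards [self_mem_nhdsWithin] with x hx
    have hx0 : (0:ℝ) < x := hx
    have h1 := xrw hx0 ν (ν + n + 1)
    have h2 := xrw hx0 ν (ν + n + 3)
    rw [show ν + n + 1 - ν + 1 = n + 2 by ring, show ν + n + 1 + 1 = ν + n + 2 by ring] at h1
    rw [show ν + n + 3 - ν + 1 = n + 4 by ring, show ν + n + 3 + 1 = ν + n + 4 by ring] at h2
    have hx4 : x ^ (n + 4) = x ^ (n + 2) * x ^ 2 := by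
      rw [show n + 4 = (n + 2) + ((2:ℕ):ℝ) by push_cast; ring, Real.rpow_add hx0,
        Real.rpow_natCast]
    have ht : x ^ (n + 2) ≠ 0 := (Real.rpow_pos_of_pos hx0 _).ne'
    rw [h1, h2, hx4]
    field_simp
  -- limits
  have hy : Filter.Tendsto (fun x : ℝ => (x/2) ^ 2) (nhdsWithin 0 (Set.Ioi 0))
      (nhdsWithin 0 (Set.Ioi 0)) := by
    apply tendsto_nhdsWithin_of_tendsto_nhds_of_eventually_within
    · have h : Filter.Tendsto (fun x : ℝ => (x/2) ^ 2) (nhds 0) (nhds (((0:ℝ)/2) ^ 2)) :=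
        (Continuous.tendsto (by continuity) 0)
      norm_num at h
      exact h.mono_left nhdsWithin_le_nhds
    · filter_upwards [self_mem_nhdsWithin] with x hx
      have : (0:ℝ) < x := hx
      exact Set.mem_Ioi.mpr (by positivity)
  have hG1 : Filter.Tendsto (fun x : ℝ => Gaux (ν + n + 1) ((x/2) ^ 2))
      (nhdsWithin 0 (Set.Ioi 0))
      (nhds (1 / (Real.Gamma (3/2) * Real.Gamma (ν + n + 1 + 3/2)))) :=
    (tendsto_Gaux hμ1).comp hy
  have hG2 : Filter.Tendsto (fun x : ℝ => Gaux (ν + n + 3) ((x/2) ^ 2))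
      (nhdsWithin 0 (Set.Ioi 0))
      (nhds (1 / (Real.Gamma (3/2) * Real.Gamma (ν + n + 3 + 3/2)))) :=
    (tendsto_Gaux hμ2).comp hy
  have hx2 : Filter.Tendsto (fun x : ℝ => x ^ 2) (nhdsWithin 0 (Set.Ioi 0)) (nhds 0) := by
    have h := (continuous_pow 2).tendsto (0:ℝ)
    norm_num at h
    exact h.mono_left nhdsWithin_le_nhds
  have hlim : Filter.Tendsto
      (fun x : ℝ => Q * ((2 * (ν + n + 1) / (n + 1)) * (2:ℝ) ^ (-(ν + n + 2)) *
          Gaux (ν + n + 1) ((x/2) ^ 2) -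
        ((2 * ν + n + 1) / (n + 1)) * (2:ℝ) ^ (-(ν + n + 4)) * x ^ 2 *
          Gaux (ν + n + 3) ((x/2) ^ 2) +
        bConst ν n * x ^ 2 - cConst ν n))
      (nhdsWithin 0 (Set.Ioi 0))
      (nhds (Q * ((2 * (ν + n + 1) / (n + 1)) * (2:ℝ) ^ (-(ν + n + 2)) *
          (1 / (Real.Gamma (3/2) * Real.Gamma (ν + n + 1 + 3/2))) -
        ((2 * ν + n + 1) / (n + 1)) * (2:ℝ) ^ (-(ν + n + 4)) * 0 *
          (1 / (Real.Gamma (3/2) * Real.Gamma (ν + n + 3 + 3/2))) +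
        bConst ν n * 0 - cConst ν n))) := by
    exact Filter.Tendsto.const_mul Q
      ((((tendsto_const_nhds.mul hG1).sub
          ((tendsto_const_nhds.mul hx2).mul hG2)).add
        (tendsto_const_nhds.mul hx2)).sub tendsto_const_nhds)
  have hone : Q * ((2 * (ν + n + 1) / (n + 1)) * (2:ℝ) ^ (-(ν + n + 2)) *
          (1 / (Real.Gamma (3/2) * Real.Gamma (ν + n + 1 + 3/2))) -
        ((2 * ν + n + 1) / (n + 1)) * (2:ℝ) ^ (-(ν + n + 4)) * 0 *
          (1 / (Real.Gamma (3/2) * Real.Gamma (ν + n + 3 + 3/2))) +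
        bConst ν n * 0 - cConst ν n) = 1 := by
    have h32 : Real.Gamma (3/2) = Real.sqrt Real.pi / 2 := by
      rw [show (3:ℝ)/2 = 1/2 + 1 by norm_num, Real.Gamma_add_one (by norm_num),
        Real.Gamma_one_half_eq]
      ring
    have h52 : Real.Gamma (ν + n + 1 + 3/2) = (ν + n + 3/2) * Real.Gamma (ν + n + 3/2) := by
      rw [show ν + n + 1 + 3/2 = (ν + n + 3/2) + 1 by ring, Real.Gamma_add_one hs.ne']
    have h52' : Real.Gamma (ν + n + 5/2) = (ν + n + 3/2) * Real.Gamma (ν + n + 3/2) := by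
      rw [show ν + n + 5/2 = (ν + n + 3/2) + 1 by ring, Real.Gamma_add_one hs.ne']
    have hp2 : (2:ℝ) ^ (-(ν + n + 2)) = 1 / ((2:ℝ) ^ (ν + n) * 4) := by
      rw [Real.rpow_neg (by norm_num : (0:ℝ) ≤ 2),
        show ν + n + 2 = (ν + n) + ((2:ℕ):ℝ) by push_cast; ring, Real.rpow_add two_pos,
        Real.rpow_natCast]
      norm_num
    have hp1 : (2:ℝ) ^ (ν + n + 1) = (2:ℝ) ^ (ν + n) * 2 := by
      rw [show ν + n + 1 = (ν + n) + 1 by ring, Real.rpow_add two_pos, Real.rpow_one]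
    rw [hQdef, cConst, h32, h52, h52', hp2, hp1]
    rw [mul_zero, zero_mul, mul_zero, sub_zero, add_zero]
    set S := Real.sqrt Real.pi
    set P := (2:ℝ) ^ (ν + n)
    set G := Real.Gamma (ν + n + 3/2)
    have hS : S ≠ 0 := hπ.ne'
    have hPn : P ≠ 0 := hP.ne'
    have hGn : G ≠ 0 := hΓ.ne'
    have hd1 : (n + 1) * (P * 4) * (S / 2 * ((ν + n + 3/2) * G)) ≠ 0 := by
      apply mul_ne_zero (mul_ne_zero hn1.ne' (mul_ne_zero hPn (by norm_num)))
      exact mul_ne_zero (by simpa using hS) (mul_ne_zero hs.ne' hGn)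
    have hd2 : S * (P * 2) * (n + 1) * (n + 2) * ((ν + n + 3/2) * G) ≠ 0 := by
      apply mul_ne_zero (mul_ne_zero (mul_ne_zero (mul_ne_zero hS
        (mul_ne_zero hPn (by norm_num))) hn1.ne') hn2.ne')
      exact mul_ne_zero hs.ne' hGn
    rw [div_mul_div_comm, div_mul_div_comm, div_sub_div _ _ hd1 hd2, ← mul_div_assoc,
      div_eq_one_iff_eq (by exact mul_ne_zero hd1 hd2)]
    ring
  rw [hone] at hlim
  exact Filter.Tendsto.congr' heq.symm hlim
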